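/- Let n ≥ 5, let ρ = |W_n⟩⟨W_n| be the W-state projector, and let ρ' be any n-qubit quantum state such that the set {a ∈ (Fin n → Fin 4) : ⟨P_a⟩_{ρ'}² = 1} has cardinality at least 2^(3n/4). Then ‖ρ − ρ'‖₁ ≥ 1/4. -/

import Mathlib

open Matrix Kronecker
open scoped ComplexOrder

noncomputable def pauli1 : Fin 4 → Matrix (Fin 2) (Fin 2) ℂ
  | 0 => !![1, 0; 0, 1]
  | 1 => !![0, 1; 1, 0]
  | 2 => !![0, -Complex.I; Complex.I, 0]
  | 3 => !![1, 0; 0, -1]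

noncomputable def PauliOp {n : ℕ} (a : Fin n → Fin 4) :
    Matrix (Fin n → Fin 2) (Fin n → Fin 2) ℂ :=
  Matrix.of fun z z' => ∏ i, pauli1 (a i) (z i) (z' i)

/-- The trace norm of a matrix: the trace of the positive semidefinite square root of `Aᴴ * A`. -/
noncomputable def traceNorm {m : Type*} [Fintype m] [DecidableEq m]
    (A : Matrix m m ℂ) : ℝ :=
  ((Matrix.posSemidef_conjTranspose_mul_self A).1.eigenvectorUnitary.1 *
    diagonal (((↑) : ℝ → ℂ) ∘ Real.sqrt ∘ (Matrix.posSemidef_conjTranspose_mul_self A).1.eigenvalues) *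
    (star (Matrix.posSemidef_conjTranspose_mul_self A).1.eigenvectorUnitary : Matrix m m ℂ)).trace.re

/-- A quantum state: positive semidefinite with unit trace. -/
structure IsState {m : Type*} [Fintype m] (ρ : Matrix m m ℂ) : Prop where
  posSemidef : ρ.PosSemidef
  trace_one : ρ.trace = 1

/-- Pauli expectation value `⟨P_a⟩_ρ`. -/
noncomputable def pExp {n : ℕ} (ρ : Matrix (Fin n → Fin 2) (Fin n → Fin 2) ℂ)
    (a : Fin n → Fin 4) : ℝ := ((PauliOp a * ρ).trace).re

/-- The purity `tr ρ²`. -/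
noncomputable def purity {m : Type*} [Fintype m] (ρ : Matrix m m ℂ) : ℝ :=
  ((ρ * ρ).trace).re

/-- The Pauli distribution `p_ρ`. -/
noncomputable def pDist {n : ℕ} (ρ : Matrix (Fin n → Fin 2) (Fin n → Fin 2) ℂ)
    (a : Fin n → Fin 4) : ℝ := (pExp ρ a) ^ 2 / (2 ^ n * purity ρ)

/-- The cumulative distribution function `F_ρ`. -/
noncomputable def cdf {n : ℕ} (ρ : Matrix (Fin n → Fin 2) (Fin n → Fin 2) ℂ)
    (ε : ℝ) : ℝ := ∑ a : Fin n → Fin 4, if (pExp ρ a) ^ 2 ≤ ε then pDist ρ a else 0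

/-- The maximally entangled state `|Φ₀⟩`. -/
noncomputable def Phi0 (n : ℕ) : (Fin n → Fin 2) × (Fin n → Fin 2) → ℂ :=
  fun p => if p.1 = p.2 then (↑(Real.sqrt (2 ^ n)))⁻¹ else 0

/-- The Bell state `|Φ_a⟩ = (1 ⊗ P_a)|Φ₀⟩`. -/
noncomputable def BellVec {n : ℕ} (a : Fin n → Fin 4) :
    (Fin n → Fin 2) × (Fin n → Fin 2) → ℂ :=
  ((1 : Matrix (Fin n → Fin 2) (Fin n → Fin 2) ℂ) ⊗ₖ PauliOp a).mulVec (Phi0 n)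

/-- The Bell distribution `q_ρ(a) = ⟨Φ_a| ρ ⊗ ρ |Φ_a⟩`. -/
noncomputable def qDist {n : ℕ} (ρ : Matrix (Fin n → Fin 2) (Fin n → Fin 2) ℂ)
    (a : Fin n → Fin 4) : ℝ :=
  (star (BellVec a) ⬝ᵥ ((ρ ⊗ₖ ρ).mulVec (BellVec a))).re

/-- The W state. -/
noncomputable def Wstate (n : ℕ) : (Fin n → Fin 2) → ℂ :=
  fun z => if (∑ i, (z i : ℕ)) = 1 then (↑(Real.sqrt n))⁻¹ else 0

/-- The W state projector `|W_n⟩⟨W_n|`. -/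
noncomputable def Wproj (n : ℕ) : Matrix (Fin n → Fin 2) (Fin n → Fin 2) ℂ :=
  Matrix.vecMulVec (Wstate n) (star (Wstate n))

/-! ### Auxiliary lemmas -/

section TraceNorm

variable {m : Type*} [Fintype m] [DecidableEq m]

lemma traceNorm_hermitian (D : Matrix m m ℂ) (hD : D.IsHermitian) :
    traceNorm D = ∑ i, |hD.eigenvalues i| := by
  classical
  have hH := (Matrix.posSemidef_conjTranspose_mul_self D).1
  have h1 : traceNorm D = (cfc Real.sqrt (Dᴴ * D)).trace.re := by
    rw [hH.cfc_eq, Matrix.IsHermitian.cfc, Unitary.conjStarAlgAut_apply]; rfl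
  have hsa : IsSelfAdjoint D := hD
  have h2 : Dᴴ * D = cfc (fun x : ℝ => x ^ 2) D := by
    rw [cfc_pow_id D 2 hsa, hD.eq, pow_two]
  rw [h1, h2, ← cfc_comp Real.sqrt (fun x : ℝ => x ^ 2) D hsa]
  have h3 : (Real.sqrt ∘ fun x : ℝ => x ^ 2) = abs := funext fun x => Real.sqrt_sq_eq_abs x
  rw [h3, hD.cfc_eq, Matrix.IsHermitian.cfc, Unitary.conjStarAlgAut_apply, Matrix.trace_mul_cycle]
  have hU : (star (hD.eigenvectorUnitary : Matrix m m ℂ)) * hD.eigenvectorUnitary = 1 :=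
    Matrix.mem_unitaryGroup_iff'.mp hD.eigenvectorUnitary.2
  rw [hU, Matrix.one_mul]
  simp [Matrix.trace, Matrix.diag, Function.comp]

lemma unit_exp_le (P : Matrix m m ℂ) (hP : Pᴴ * P = 1)
    (v : EuclideanSpace ℂ m) (hv : ‖v‖ = 1) :
    ‖(star (v : m → ℂ)) ⬝ᵥ (P *ᵥ (v : m → ℂ))‖ ≤ 1 := by
  classical
  set w : EuclideanSpace ℂ m := (WithLp.equiv 2 (m → ℂ)).symm (P *ᵥ (v : m → ℂ)) with hw
  have hinner : (inner ℂ v w : ℂ) = (star (v : m → ℂ)) ⬝ᵥ (P *ᵥ (v : m → ℂ)) := by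
    rw [EuclideanSpace.inner_eq_star_dotProduct, dotProduct_comm]
    rfl
  have hwnorm : ‖w‖ = 1 := by
    have h2 : (inner ℂ w w : ℂ) = (star (v : m → ℂ)) ⬝ᵥ (v : m → ℂ) := by
      rw [EuclideanSpace.inner_eq_star_dotProduct, dotProduct_comm]
      show star (P *ᵥ (v : m → ℂ)) ⬝ᵥ (P *ᵥ (v : m → ℂ)) = _
      rw [star_mulVec, Matrix.dotProduct_mulVec, Matrix.vecMul_vecMul]
      rw [hP, Matrix.vecMul_one]
    have h3 : (inner ℂ v v : ℂ) = (star (v : m → ℂ)) ⬝ᵥ (v : m → ℂ) := by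
      rw [EuclideanSpace.inner_eq_star_dotProduct, dotProduct_comm]
    have h4 : (inner ℂ w w : ℂ) = inner ℂ v v := by rw [h2, h3]
    have hn : ((‖w‖ : ℂ)) ^ 2 = ((‖v‖ : ℂ)) ^ 2 := by
      rw [inner_self_eq_norm_sq_to_K, inner_self_eq_norm_sq_to_K] at h4
      exact h4
    have hn' : ‖w‖ ^ 2 = ‖v‖ ^ 2 := by exact_mod_cast hn
    nlinarith [norm_nonneg w, norm_nonneg v]
  calc ‖(star (v : m → ℂ)) ⬝ᵥ (P *ᵥ (v : m → ℂ))‖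
      = ‖(inner ℂ v w : ℂ)‖ := by rw [hinner]
    _ ≤ ‖v‖ * ‖w‖ := norm_inner_le_norm v w
    _ = 1 := by rw [hv, hwnorm, mul_one]

lemma key_bound (P D : Matrix m m ℂ) (hD : D.IsHermitian)
    (hb : ∀ v : EuclideanSpace ℂ m, ‖v‖ = 1 →
      ‖(star (v : m → ℂ)) ⬝ᵥ (P *ᵥ (v : m → ℂ))‖ ≤ 1) :
    |((P * D).trace).re| ≤ ∑ i, |hD.eigenvalues i| := by
  classical
  set U : Matrix m m ℂ := (hD.eigenvectorUnitary : Matrix m m ℂ) with hUdef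
  set lam := hD.eigenvalues with hlam
  set M : Matrix m m ℂ := (star U) * P * U with hM
  have htr : (P * D).trace = ∑ i, M i i * (lam i : ℂ) := by
    conv_lhs => rw [hD.spectral_theorem]
    rw [Unitary.conjStarAlgAut_apply, ← hUdef, ← hlam]
    rw [show P * ((U * diagonal (RCLike.ofReal ∘ lam)) * star U)
        = P * (U * diagonal (RCLike.ofReal ∘ lam)) * star U from by
      simp only [Matrix.mul_assoc]]
    rw [Matrix.trace_mul_cycle, show star U * P * (U * diagonal (RCLike.ofReal ∘ lam))
        = M * diagonal (RCLike.ofReal ∘ lam) from by rw [hM]; simp only [Matrix.mul_assoc]]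
    rw [Matrix.trace]
    congr 1
    funext i
    rw [Matrix.diag_apply, Matrix.mul_diagonal]
    rfl
  have hMle : ∀ i, ‖M i i‖ ≤ 1 := by
    intro i
    have hv1 : ‖hD.eigenvectorBasis i‖ = 1 := hD.eigenvectorBasis.orthonormal.1 i
    have hbi := hb (hD.eigenvectorBasis i) hv1
    have heq : M i i = (star (⇑(hD.eigenvectorBasis i) : m → ℂ)) ⬝ᵥ
        (P *ᵥ (⇑(hD.eigenvectorBasis i) : m → ℂ)) := by
      rw [hM]
      simp only [Matrix.mul_apply, dotProduct, Matrix.mulVec, Matrix.star_apply,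
        Finset.sum_mul, Finset.mul_sum]
      rw [Finset.sum_comm]
      apply Finset.sum_congr rfl
      intro j _
      apply Finset.sum_congr rfl
      intro k _
      have hU1 : ∀ a b, U a b = hD.eigenvectorBasis b a := fun _ _ => rfl
      rw [hU1, hU1]
      show star (hD.eigenvectorBasis i j) * P j k * hD.eigenvectorBasis i k
        = star (hD.eigenvectorBasis i j) * (P j k * hD.eigenvectorBasis i k)
      ring
    rw [heq]
    exact hbi
  rw [htr]
  calc |(∑ i, M i i * (lam i : ℂ)).re| = |∑ i, (M i i * (lam i : ℂ)).re| := by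
        rw [Complex.re_sum]
    _ ≤ ∑ i, |(M i i * (lam i : ℂ)).re| := Finset.abs_sum_le_sum_abs _ _
    _ ≤ ∑ i, |lam i| := by
        apply Finset.sum_le_sum
        intro i _
        calc |(M i i * (lam i : ℂ)).re| ≤ ‖M i i * (lam i : ℂ)‖ :=
              Complex.abs_re_le_norm _
          _ = ‖M i i‖ * |lam i| := by
              rw [norm_mul, Complex.norm_real, Real.norm_eq_abs]
          _ ≤ 1 * |lam i| := by
              apply mul_le_mul_of_nonneg_right (hMle i) (abs_nonneg _)
          _ = |lam i| := one_mul _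

end TraceNorm

section Pauli

lemma pauli1_colsum (c : Fin 4) (z z' : Fin 2) :
    ∑ b : Fin 2, (starRingEnd ℂ) (pauli1 c b z) * pauli1 c b z'
      = if z = z' then 1 else 0 := by
  fin_cases c <;> fin_cases z <;> fin_cases z' <;>
    simp [pauli1, Fin.sum_univ_two, Complex.ext_iff]

lemma pauli1_abs_le (c : Fin 4) (z z' : Fin 2) : ‖pauli1 c z z'‖ ≤ 1 := by
  fin_cases c <;> fin_cases z <;> fin_cases z' <;>
    simp [pauli1]

lemma pauliOp_unitary {n : ℕ} (a : Fin n → Fin 4) :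
    (PauliOp a)ᴴ * PauliOp a = 1 := by
  ext z z'
  rw [Matrix.mul_apply]
  simp only [PauliOp, Matrix.conjTranspose_apply, Matrix.of_apply, star_prod]
  have : ∀ w : Fin n → Fin 2,
      (∏ i, star (pauli1 (a i) (w i) (z i))) * ∏ i, pauli1 (a i) (w i) (z' i)
      = ∏ i, (starRingEnd ℂ) (pauli1 (a i) (w i) (z i)) * pauli1 (a i) (w i) (z' i) := by
    intro w
    rw [← Finset.prod_mul_distrib]
    rfl
  rw [Finset.sum_congr rfl fun w _ => this w]
  rw [show (Finset.univ : Finset (Fin n → Fin 2)) = Fintype.piFinset (fun _ => Finset.univ) from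
    (Fintype.piFinset_univ).symm]
  rw [← Finset.prod_univ_sum (fun _ : Fin n => (Finset.univ : Finset (Fin 2)))
    (fun i b => (starRingEnd ℂ) (pauli1 (a i) b (z i)) * pauli1 (a i) b (z' i))]
  rw [Finset.prod_congr rfl fun i _ => pauli1_colsum (a i) (z i) (z' i)]
  rw [Matrix.one_apply]
  by_cases h : z = z'
  · simp [h]
  · obtain ⟨i, hi⟩ := Function.ne_iff.mp h
    rw [if_neg h]
    exact Finset.prod_eq_zero (Finset.mem_univ i) (if_neg hi)

lemma pauliOp_abs_le {n : ℕ} (a : Fin n → Fin 4) (z z' : Fin n → Fin 2) :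
    ‖PauliOp a z z'‖ ≤ 1 := by
  simp only [PauliOp, Matrix.of_apply, norm_prod]
  calc ∏ i, ‖pauli1 (a i) (z i) (z' i)‖ ≤ ∏ i, 1 :=
        Finset.prod_le_prod (fun i _ => norm_nonneg _)
          (fun i _ => pauli1_abs_le _ _ _)
    _ = 1 := Finset.prod_const_one

end Pauli

section Wlemmas

def eV {n : ℕ} (j : Fin n) : Fin n → Fin 2 := fun i => if i = j then 1 else 0

lemma eV_injective {n : ℕ} : Function.Injective (eV (n := n)) := by
  intro j k h
  have := congrFun h j
  simp only [eV, if_pos rfl] at this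
  by_contra hne
  rw [if_neg hne] at this
  exact one_ne_zero this

lemma weight_eq_one_iff {n : ℕ} (z : Fin n → Fin 2) :
    (∑ i, (z i : ℕ)) = 1 ↔ ∃ j, z = eV j := by
  constructor
  · intro h
    have hne : (∑ i, (z i : ℕ)) ≠ 0 := by omega
    obtain ⟨j, _, hj⟩ := Finset.exists_ne_zero_of_sum_ne_zero hne
    have hzj : z j = 1 := by
      have h2 := (z j).2
      exact Fin.ext (by omega)
    have hsum : (z j : ℕ) + ∑ i ∈ Finset.univ.erase j, (z i : ℕ) = 1 :=
      (Finset.add_sum_erase Finset.univ (fun i => (z i : ℕ)) (Finset.mem_univ j)).trans h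
    have hz0 : ∀ i, i ≠ j → z i = 0 := by
      intro i hi
      have h0 : ∑ i ∈ Finset.univ.erase j, (z i : ℕ) = 0 := by
        rw [hzj] at hsum
        omega
      have := (Finset.sum_eq_zero_iff).mp h0 i (Finset.mem_erase.mpr ⟨hi, Finset.mem_univ i⟩)
      exact Fin.ext this
    refine ⟨j, funext fun i => ?_⟩
    by_cases hij : i = j
    · subst hij; rw [hzj]; simp [eV]
    · rw [hz0 i hij]; simp [eV, hij]
  · rintro ⟨j, rfl⟩
    have : ∀ i, ((eV j i : ℕ)) = if i = j then 1 else 0 := by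
      intro i
      by_cases h : i = j <;> simp [eV, h]
    rw [Finset.sum_congr rfl (fun i _ => this i), Finset.sum_ite_eq' Finset.univ j fun _ => 1]
    simp

lemma Wstate_eV {n : ℕ} (j : Fin n) : Wstate n (eV j) = ((Real.sqrt n : ℝ) : ℂ)⁻¹ := by
  rw [Wstate, if_pos ((weight_eq_one_iff _).mpr ⟨j, rfl⟩)]

lemma Wstate_zero {n : ℕ} {z : Fin n → Fin 2} (h : ∀ j, z ≠ eV j) : Wstate n z = 0 := by
  rw [Wstate, if_neg]
  rw [weight_eq_one_iff]
  rintro ⟨j, rfl⟩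
  exact h j rfl

lemma trace_pauli_W {n : ℕ} (a : Fin n → Fin 4) :
    (PauliOp a * Wproj n).trace = ((n : ℂ))⁻¹ * ∑ k, ∑ j, PauliOp a (eV k) (eV j) := by
  classical
  have hWproj : ∀ z z' : Fin n → Fin 2, Wproj n z' z = Wstate n z' * star (Wstate n z) := by
    intro z z'
    rfl
  have htr : (PauliOp a * Wproj n).trace
      = ∑ z, ∑ z', PauliOp a z z' * (Wstate n z' * star (Wstate n z)) := by
    rw [Matrix.trace]
    apply Finset.sum_congr rfl
    intro z _
    rw [Matrix.diag_apply, Matrix.mul_apply]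
    exact Finset.sum_congr rfl fun z' _ => by rw [hWproj]
  rw [htr]
  rw [← Finset.sum_subset (Finset.subset_univ (Finset.univ.image eV))
    (fun z _ hz => ?_)]
  · rw [Finset.sum_image (fun k _ k' _ h => eV_injective h)]
    have : ∀ k : Fin n, (∑ z', PauliOp a (eV k) z' * (Wstate n z' * star (Wstate n (eV k))))
        = ∑ j, PauliOp a (eV k) (eV j) * ((n : ℂ))⁻¹ := by
      intro k
      rw [← Finset.sum_subset (Finset.subset_univ (Finset.univ.image eV))
        (fun z' _ hz' => ?_)]
      · rw [Finset.sum_image (fun k _ k' _ h => eV_injective h)]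
        apply Finset.sum_congr rfl
        intro j _
        rw [Wstate_eV, Wstate_eV]
        congr 1
        rw [star_inv₀, Complex.star_def, Complex.conj_ofReal, ← mul_inv, ← Complex.ofReal_mul,
          Real.mul_self_sqrt (Nat.cast_nonneg n)]
        norm_num
      · have : Wstate n z' = 0 := by
          apply Wstate_zero
          intro j hj
          exact hz' (Finset.mem_image.mpr ⟨j, Finset.mem_univ j, hj.symm⟩)
        rw [this, zero_mul, mul_zero]
    rw [Finset.sum_congr rfl fun k _ => this k]
    rw [Finset.mul_sum]
    apply Finset.sum_congr rfl
    intro k _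
    rw [Finset.mul_sum]
    exact Finset.sum_congr rfl fun j _ => mul_comm _ _
  · have : Wstate n z = 0 := by
      apply Wstate_zero
      intro j hj
      exact hz (Finset.mem_image.mpr ⟨j, Finset.mem_univ j, hj.symm⟩)
    rw [this]
    simp

lemma hp00 (c : Fin 4) (h : pauli1 c 0 0 ≠ 0) : c = 0 ∨ c = 3 := by
  fin_cases c <;> simp [pauli1] at h ⊢
lemma hp11 (c : Fin 4) (h : pauli1 c 1 1 ≠ 0) : c = 0 ∨ c = 3 := by
  fin_cases c <;> simp [pauli1] at h ⊢
lemma hp01 (c : Fin 4) (h : pauli1 c 0 1 ≠ 0) : c = 1 ∨ c = 2 := by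
  fin_cases c <;> simp [pauli1] at h ⊢
lemma hp10 (c : Fin 4) (h : pauli1 c 1 0 ≠ 0) : c = 1 ∨ c = 2 := by
  fin_cases c <;> simp [pauli1] at h ⊢

lemma fin4_incompat {c : Fin 4} (h1 : c = 0 ∨ c = 3) (h2 : c = 1 ∨ c = 2) : False := by
  rcases h1 with rfl | rfl <;> rcases h2 with h2 | h2 <;> exact absurd h2 (by decide)

lemma eV_self {n : ℕ} (k : Fin n) : eV k k = 1 := by simp [eV]
lemma eV_ne {n : ℕ} {k i : Fin n} (h : i ≠ k) : eV k i = 0 := by simp [eV, h]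

lemma pauliOp_entry_ne_zero {n : ℕ} (a : Fin n → Fin 4) (j k : Fin n)
    (h : PauliOp a (eV k) (eV j) ≠ 0) :
    (j = k ∧ ∀ i, a i = 0 ∨ a i = 3) ∨
    (j ≠ k ∧ (a j = 1 ∨ a j = 2) ∧ (a k = 1 ∨ a k = 2) ∧
      ∀ i, i ≠ j → i ≠ k → (a i = 0 ∨ a i = 3)) := by
  rw [PauliOp, Matrix.of_apply] at h
  rw [Finset.prod_ne_zero_iff] at h
  by_cases hjk : j = k
  · subst hjk
    left
    refine ⟨rfl, fun i => ?_⟩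
    by_cases hij : i = j
    · subst hij
      have := h i (Finset.mem_univ i)
      rw [eV_self] at this
      exact hp11 _ this
    · have := h i (Finset.mem_univ i)
      rw [eV_ne hij] at this
      exact hp00 _ this
  · right
    refine ⟨hjk, ?_, ?_, fun i hij hik => ?_⟩
    · have := h j (Finset.mem_univ j)
      rw [eV_ne hjk, eV_self] at this
      exact hp01 _ this
    · have := h k (Finset.mem_univ k)
      rw [eV_self, eV_ne (fun hkj => hjk hkj.symm)] at this
      exact hp10 _ this
    · have := h i (Finset.mem_univ i)
      rw [eV_ne hik, eV_ne hij] at this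
      exact hp00 _ this

lemma pauliOp_diag_entry {n : ℕ} (a : Fin n → Fin 4) (h : ∀ i, a i = 0 ∨ a i = 3) (k : Fin n) :
    PauliOp a (eV k) (eV k) = if a k = 3 then -1 else 1 := by
  rw [PauliOp, Matrix.of_apply]
  rw [← Finset.mul_prod_erase _ _ (Finset.mem_univ k)]
  have h1 : ∏ i ∈ Finset.univ.erase k, pauli1 (a i) (eV k i) (eV k i) = 1 := by
    apply Finset.prod_eq_one
    intro i hi
    have hik : i ≠ k := (Finset.mem_erase.mp hi).1
    rw [eV_ne hik]
    rcases h i with h' | h' <;> rw [h'] <;> simp [pauli1]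
  rw [h1, mul_one, eV_self]
  rcases h k with h' | h' <;> rw [h'] <;> simp [pauli1]

end Wlemmas
section PExpW

lemma pExp_W_diag {n : ℕ} (a : Fin n → Fin 4) (h : ∀ i, a i = 0 ∨ a i = 3) :
    pExp (Wproj n) a
      = ((n : ℝ) - 2 * ((Finset.univ.filter (fun i => a i = 3)).card : ℝ)) / n := by
  classical
  rw [pExp, trace_pauli_W]
  have hsum : ∀ k : Fin n, (∑ j, PauliOp a (eV k) (eV j)) = if a k = 3 then -1 else 1 := by
    intro k
    rw [Finset.sum_eq_single k]
    · exact pauliOp_diag_entry a h k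
    · intro j _ hjk
      by_contra hne
      rcases pauliOp_entry_ne_zero a j k hne with ⟨rfl, _⟩ | ⟨_, hj, _, _⟩
      · exact hjk rfl
      · exact fin4_incompat (h j) hj
    · intro hk
      exact absurd (Finset.mem_univ k) hk
  rw [Finset.sum_congr rfl fun k _ => hsum k]
  have : (∑ k : Fin n, if a k = 3 then (-1 : ℂ) else 1)
      = Complex.ofReal ((n : ℝ) - 2 * ((Finset.univ.filter (fun i => a i = 3)).card : ℝ)) := by
    have h1 : ∀ k : Fin n, (if a k = 3 then (-1 : ℂ) else 1)
        = 1 - 2 * (if a k = 3 then 1 else 0) := by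
      intro k
      by_cases h' : a k = 3 <;> simp [h'] <;> ring
    rw [Finset.sum_congr rfl fun k _ => h1 k, Finset.sum_sub_distrib, Finset.sum_const,
      ← Finset.mul_sum, Finset.sum_boole]
    push_cast
    simp
  rw [this]
  rw [show ((n:ℂ))⁻¹ * Complex.ofReal ((n : ℝ) - 2 * _)
      = Complex.ofReal (((n : ℝ) - 2 * ((Finset.univ.filter (fun i => a i = 3)).card : ℝ)) / n)
    from by push_cast; ring]
  rw [Complex.ofReal_re]

lemma pExp_W_offdiag {n : ℕ} (a : Fin n → Fin 4) (i0 : Fin n) (h0 : a i0 = 1 ∨ a i0 = 2) :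
    |pExp (Wproj n) a| ≤ 2 / n := by
  classical
  rw [pExp, trace_pauli_W]
  have habs : ‖∑ k, ∑ j, PauliOp a (eV k) (eV j)‖ ≤ 2 := by
    by_cases hA : ∃ i1, i1 ≠ i0 ∧ (a i1 = 1 ∨ a i1 = 2)
    · obtain ⟨i1, hi1ne, hi1⟩ := hA
      set s : Finset (Fin n × Fin n) := {(i0, i1), (i1, i0)} with hs
      have hzero : ∀ p ∈ (Finset.univ ×ˢ Finset.univ : Finset (Fin n × Fin n)),
          p ∉ s → PauliOp a (eV p.1) (eV p.2) = 0 := by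
        rintro ⟨k, j⟩ _ hp
        by_contra hne
        rcases pauliOp_entry_ne_zero a j k hne with ⟨rfl, hall⟩ | ⟨hjk, hj, hk, hrest⟩
        · exact fin4_incompat (hall i0) h0
        · have hi0m : i0 = j ∨ i0 = k := by
            by_contra hcon
            push_neg at hcon
            exact fin4_incompat (hrest i0 hcon.1 hcon.2) h0
          have hi1m : i1 = j ∨ i1 = k := by
            by_contra hcon
            push_neg at hcon
            exact fin4_incompat (hrest i1 hcon.1 hcon.2) hi1
          apply hp
          rw [hs]
          rcases hi0m with rfl | rfl
          · rcases hi1m with rfl | rfl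
            · exact absurd rfl hi1ne
            · simp
          · rcases hi1m with rfl | rfl
            · simp
            · exact absurd rfl hi1ne
      have hrw : (∑ k, ∑ j, PauliOp a (eV k) (eV j))
          = ∑ p ∈ s, PauliOp a (eV p.1) (eV p.2) := by
        rw [← Finset.sum_product']
        exact (Finset.sum_subset (Finset.subset_univ s)
          (fun p hp hps => hzero p hp hps)).symm
      rw [hrw]
      calc ‖∑ p ∈ s, PauliOp a (eV p.1) (eV p.2)‖
          ≤ ∑ p ∈ s, ‖PauliOp a (eV p.1) (eV p.2)‖ := by
            exact norm_sum_le _ _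
        _ ≤ ∑ _p ∈ s, 1 := Finset.sum_le_sum fun p _ => pauliOp_abs_le _ _ _
        _ = s.card := by rw [Finset.sum_const]; simp
        _ ≤ 2 := by
            have : s.card ≤ 2 := by
              rw [hs]
              apply le_trans (Finset.card_insert_le _ _)
              simp
            exact_mod_cast this
    · push_neg at hA
      have hallzero : ∀ k j : Fin n, PauliOp a (eV k) (eV j) = 0 := by
        intro k j
        by_contra hne
        rcases pauliOp_entry_ne_zero a j k hne with ⟨rfl, hall⟩ | ⟨hjk, hj, hk, _⟩
        · exact fin4_incompat (hall i0) h0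
        · have hj0 : j = i0 := by
            by_contra hcon
            rcases hj with h | h
            exacts [(hA j hcon).1 h, (hA j hcon).2 h]
          have hk0 : k = i0 := by
            by_contra hcon
            rcases hk with h | h
            exacts [(hA k hcon).1 h, (hA k hcon).2 h]
          exact hjk (hj0.trans hk0.symm)
      rw [Finset.sum_congr rfl fun k _ => Finset.sum_eq_zero fun j _ => hallzero k j]
      simp
  calc |(((n : ℂ))⁻¹ * ∑ k, ∑ j, PauliOp a (eV k) (eV j)).re|
      ≤ ‖((n : ℂ))⁻¹ * ∑ k, ∑ j, PauliOp a (eV k) (eV j)‖ :=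
        Complex.abs_re_le_norm _
    _ = ((n:ℝ))⁻¹ * ‖∑ k, ∑ j, PauliOp a (eV k) (eV j)‖ := by
        rw [norm_mul, norm_inv, Complex.norm_natCast]
    _ ≤ ((n:ℝ))⁻¹ * 2 := by
        apply mul_le_mul_of_nonneg_left habs
        positivity
    _ = 2 / n := by ring

end PExpW
section Counting

lemma natkey : ∀ n : ℕ, 5 ≤ n → 256 * 262144^n < 823543^n := by
  intro n hn
  induction n with
  | zero => omega
  | succ m ih =>
    rcases Nat.lt_or_ge m 5 with h | h
    · have hm : m = 4 := by omega
      subst hm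
      norm_num
    · calc 256 * 262144^(m+1) = 262144 * (256 * 262144^m) := by ring
        _ < 262144 * 823543^m := by
            exact (Nat.mul_lt_mul_left (by norm_num)).mpr (ih h)
        _ ≤ 823543 * 823543^m := Nat.mul_le_mul_right _ (by norm_num)
        _ = 823543^(m+1) := by ring

lemma rpow_key {n : ℕ} (hn : 5 ≤ n) :
    2 * ((8/7 : ℝ)^n * (7 : ℝ)^((n:ℝ)/8)) < (2:ℝ)^((3*(n:ℝ))/4) := by
  have hA : (0:ℝ) ≤ 2 * ((8/7 : ℝ)^n * (7 : ℝ)^((n:ℝ)/8)) := by positivity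
  have hB : (0:ℝ) ≤ (2:ℝ)^((3*(n:ℝ))/4) := Real.rpow_nonneg (by norm_num) _
  apply lt_of_pow_lt_pow_left₀ 8 hB
  have e1 : ((7 : ℝ)^((n:ℝ)/8))^(8:ℕ) = (7:ℝ)^(n:ℕ) := by
    rw [← Real.rpow_natCast ((7 : ℝ)^((n:ℝ)/8)) 8, ← Real.rpow_mul (by norm_num)]
    rw [show ((n:ℝ)/8) * (8:ℕ) = (n:ℝ) by push_cast; ring]
    rw [Real.rpow_natCast]
  have e2 : ((2:ℝ)^((3*(n:ℝ))/4))^(8:ℕ) = (2:ℝ)^(6*n) := by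
    rw [← Real.rpow_natCast ((2 : ℝ)^((3*(n:ℝ))/4)) 8, ← Real.rpow_mul (by norm_num)]
    rw [show ((3*(n:ℝ))/4) * (8:ℕ) = ((6*n : ℕ) : ℝ) by push_cast; ring]
    rw [Real.rpow_natCast]
  rw [e2]
  rw [show (2 * ((8/7 : ℝ)^n * (7 : ℝ)^((n:ℝ)/8)))^(8:ℕ)
      = 2^8 * ((8/7 : ℝ)^n)^(8:ℕ) * ((7 : ℝ)^((n:ℝ)/8))^(8:ℕ) from by ring]
  rw [e1, ← pow_mul]
  have h1 : (256:ℝ) * 2^(18*n) < 7^(7*n) := by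
    have := natkey n hn
    have hc : ((256 * 262144^n : ℕ) : ℝ) < ((823543^n : ℕ) : ℝ) := by exact_mod_cast this
    push_cast at hc
    rw [show (262144:ℝ) = 2^(18:ℕ) by norm_num, show (823543:ℝ) = 7^(7:ℕ) by norm_num,
      ← pow_mul, ← pow_mul] at hc
    exact hc
  have hgoal : (256:ℝ) * 8^(n*8) * 7^n < 2^(6*n) * 7^(n*8) := by
    have h8 : (8:ℝ)^(n*8) = 2^(6*n) * 2^(18*n) := by
      rw [show (8:ℝ) = 2^(3:ℕ) by norm_num, ← pow_mul, ← pow_add]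
      congr 1
      ring
    have h7 : (7:ℝ)^(n*8) = 7^n * 7^(7*n) := by
      rw [← pow_add]
      congr 1
      ring
    rw [h8, h7]
    have hc : (0:ℝ) < 2^(6*n) * 7^n := by positivity
    calc (256:ℝ) * (2^(6*n) * 2^(18*n)) * 7^n
        = (2^(6*n) * 7^n) * (256 * 2^(18*n)) := by ring
      _ < (2^(6*n) * 7^n) * 7^(7*n) := mul_lt_mul_of_pos_left h1 hc
      _ = 2^(6*n) * (7^n * 7^(7*n)) := by ring
  rw [div_pow]
  rw [show (2:ℝ)^(8:ℕ) * ((8:ℝ)^(n*8) / (7:ℝ)^(n*8)) * 7^n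
      = (2:ℝ)^(8:ℕ) * (8:ℝ)^(n*8) * 7^n / (7:ℝ)^(n*8) from by ring]
  rw [div_lt_iff₀ (by positivity)]
  calc (2:ℝ)^(8:ℕ) * (8:ℝ)^(n*8) * 7^n = 256 * 8^(n*8) * 7^n := by norm_num
    _ < 2^(6*n) * 7^(n*8) := hgoal

end Counting
section BadCount

lemma powf_card_le {n : ℕ} :
    (((Finset.univ : Finset (Finset (Fin n))).filter (fun s => 8 * s.card < n)).card : ℝ)
      ≤ (8/7 : ℝ)^n * (7 : ℝ)^((n:ℝ)/8) := by
  classical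
  set B : ℝ := (8/7 : ℝ)^n * (7 : ℝ)^((n:ℝ)/8) with hB
  have hsum1 : ∑ s : Finset (Fin n), ((1:ℝ)/8)^s.card * ((7:ℝ)/8)^(n - s.card) = 1 := by
    have h := Fintype.prod_add (fun _ : Fin n => (1:ℝ)/8) (fun _ : Fin n => (7:ℝ)/8)
    simp only [Finset.prod_const] at h
    have h1 : ∀ s : Finset (Fin n), sᶜ.card = n - s.card := by
      intro s
      rw [Finset.card_compl, Fintype.card_fin]
    rw [Finset.sum_congr rfl (fun s _ => by rw [h1 s])] at h
    have h2 : ((1:ℝ)/8 + 7/8) = 1 := by norm_num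
    rw [h2, one_pow] at h
    exact h.symm
  have hterm : ∀ s : Finset (Fin n), 8 * s.card < n →
      (1:ℝ) ≤ B * (((1:ℝ)/8)^s.card * ((7:ℝ)/8)^(n - s.card)) := by
    intro s hs
    set t := s.card with htdef
    have htn : t ≤ n := by omega
    have hsplit : ((8:ℝ)/7)^n = (8/7:ℝ)^t * (8/7:ℝ)^(n - t) := by
      rw [← pow_add, Nat.add_sub_cancel' htn]
    have hprod : ((8:ℝ)/7)^n * (((1:ℝ)/8)^t * ((7:ℝ)/8)^(n - t)) = ((1:ℝ)/7)^t := by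
      rw [hsplit]
      rw [show (8/7:ℝ)^t * (8/7:ℝ)^(n-t) * (((1:ℝ)/8)^t * ((7:ℝ)/8)^(n - t))
          = ((8/7:ℝ) * (1/8))^t * ((8/7:ℝ) * (7/8))^(n-t) from by
        rw [mul_pow, mul_pow]; ring]
      norm_num
    have hBs : B * (((1:ℝ)/8)^t * ((7:ℝ)/8)^(n - t))
        = (7 : ℝ)^((n:ℝ)/8) * ((1:ℝ)/7)^t := by
      rw [hB]
      rw [show (8/7 : ℝ)^n * (7 : ℝ)^((n:ℝ)/8) * (((1:ℝ)/8)^t * ((7:ℝ)/8)^(n - t))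
          = (7 : ℝ)^((n:ℝ)/8) * ((8/7 : ℝ)^n * (((1:ℝ)/8)^t * ((7:ℝ)/8)^(n - t))) from by ring]
      rw [hprod]
    rw [hBs]
    have h7t : ((1:ℝ)/7)^t = ((7:ℝ)^(t:ℕ))⁻¹ := by
      rw [div_pow, one_pow, one_div]
    rw [h7t]
    rw [le_mul_inv_iff₀ (by positivity), one_mul]
    have ht8 : ((t:ℝ)) ≤ (n:ℝ)/8 := by
      have : ((8*t : ℕ) : ℝ) ≤ ((n:ℕ) : ℝ) := by exact_mod_cast le_of_lt hs
      push_cast at this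
      linarith
    calc (7:ℝ)^(t:ℕ) = (7:ℝ)^((t:ℕ):ℝ) := (Real.rpow_natCast 7 t).symm
      _ ≤ (7 : ℝ)^((n:ℝ)/8) := by
          apply Real.rpow_le_rpow_of_exponent_le (by norm_num) ht8
  calc (((Finset.univ : Finset (Finset (Fin n))).filter (fun s => 8 * s.card < n)).card : ℝ)
      = ∑ s ∈ (Finset.univ : Finset (Finset (Fin n))).filter (fun s => 8 * s.card < n),
          (1:ℝ) := by rw [Finset.sum_const]; simp
    _ ≤ ∑ s ∈ (Finset.univ : Finset (Finset (Fin n))).filter (fun s => 8 * s.card < n),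
          B * (((1:ℝ)/8)^s.card * ((7:ℝ)/8)^(n - s.card)) := by
        apply Finset.sum_le_sum
        intro s hs
        exact hterm s (Finset.mem_filter.mp hs).2
    _ ≤ ∑ s : Finset (Fin n), B * (((1:ℝ)/8)^s.card * ((7:ℝ)/8)^(n - s.card)) := by
        apply Finset.sum_le_sum_of_subset_of_nonneg (Finset.filter_subset _ _)
        intro s _ _
        have hBpos : 0 ≤ B := by rw [hB]; positivity
        positivity
    _ = B * ∑ s : Finset (Fin n), (((1:ℝ)/8)^s.card * ((7:ℝ)/8)^(n - s.card)) := by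
        rw [Finset.mul_sum]
    _ = B := by rw [hsum1, mul_one]

end BadCount
section BadCard

lemma bad_struct {n : ℕ} (hn : 5 ≤ n) (a : Fin n → Fin 4)
    (hbad : ¬ |pExp (Wproj n) a| ≤ 3/4) :
    (∀ i, a i = 0 ∨ a i = 3) ∧
      (8 * (Finset.univ.filter (fun i => a i = 3)).card < n ∨
       7 * n < 8 * (Finset.univ.filter (fun i => a i = 3)).card) := by
  classical
  have hn5 : (5:ℝ) ≤ (n:ℝ) := by exact_mod_cast hn
  have hdiag : ∀ i, a i = 0 ∨ a i = 3 := by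
    by_contra hcon
    push_neg at hcon
    obtain ⟨i0, hi0⟩ := hcon
    have h4 : ∀ c : Fin 4, c ≠ 0 → c ≠ 3 → (c = 1 ∨ c = 2) := by decide
    have hle := pExp_W_offdiag a i0 (h4 _ hi0.1 hi0.2)
    apply hbad
    calc |pExp (Wproj n) a| ≤ 2 / n := hle
      _ ≤ 3/4 := by
          rw [div_le_iff₀ (by linarith)]
          linarith
  refine ⟨hdiag, ?_⟩
  set t := (Finset.univ.filter (fun i => a i = 3)).card with htdef
  have htn : t ≤ n := by
    calc t ≤ (Finset.univ : Finset (Fin n)).card := Finset.card_filter_le _ _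
      _ = n := by simp
  have hval := pExp_W_diag a hdiag
  rw [hval] at hbad
  push_neg at hbad
  have htr : (t:ℝ) ≤ (n:ℝ) := by exact_mod_cast htn
  rcases abs_cases (((n : ℝ) - 2 * (t:ℝ)) / n) with ⟨habs, _⟩ | ⟨habs, _⟩
  · rw [habs] at hbad
    rw [lt_div_iff₀ (by linarith : (0:ℝ) < (n:ℝ))] at hbad
    left
    have : (8 * t : ℝ) < (n : ℝ) := by push_cast; linarith
    exact_mod_cast this
  · rw [habs] at hbad
    have hb2 : ((n : ℝ) - 2 * (t:ℝ)) / n < -(3/4) := by linarith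
    rw [div_lt_iff₀ (by linarith : (0:ℝ) < (n:ℝ))] at hb2
    right
    have : (7 * n : ℝ) < (8 * t : ℝ) := by linarith
    exact_mod_cast this

lemma bad_card_lt {n : ℕ} (hn : 5 ≤ n) :
    ((Finset.univ.filter (fun a : Fin n → Fin 4 => ¬ |pExp (Wproj n) a| ≤ 3/4)).card : ℝ)
      < (2:ℝ) ^ ((3*(n:ℝ))/4) := by
  classical
  set BadF := Finset.univ.filter (fun a : Fin n → Fin 4 => ¬ |pExp (Wproj n) a| ≤ 3/4) with hBadF
  set PowF := (Finset.univ : Finset (Finset (Fin n))).filter (fun s => 8 * s.card < n) with hPowF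
  set T : (Fin n → Fin 4) → Finset (Fin n) :=
    fun a => Finset.univ.filter (fun i => a i = 3) with hT
  set φ : (Fin n → Fin 4) → Bool × Finset (Fin n) :=
    fun a => (decide (8 * (T a).card < n), if 8 * (T a).card < n then T a else (T a)ᶜ) with hφ
  have hmap : ∀ a ∈ BadF, φ a ∈ (Finset.univ : Finset Bool) ×ˢ PowF := by
    intro a ha
    obtain ⟨hdiag, hw⟩ := bad_struct hn a (Finset.mem_filter.mp ha).2
    rw [Finset.mem_product]
    refine ⟨Finset.mem_univ _, ?_⟩
    rw [hPowF, Finset.mem_filter]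
    refine ⟨Finset.mem_univ _, ?_⟩
    by_cases hc : 8 * (T a).card < n
    · simp only [hφ, if_pos hc]
      exact hc
    · simp only [hφ, if_neg hc]
      have h7 : 7 * n < 8 * (T a).card := by
        rcases hw with h | h
        · exact absurd h hc
        · exact h
      have htn : (T a).card ≤ n := by
        calc (T a).card ≤ (Finset.univ : Finset (Fin n)).card := Finset.card_filter_le _ _
          _ = n := by simp
      rw [Finset.card_compl, Fintype.card_fin]
      omega
  have hinj : ∀ a1 ∈ BadF, ∀ a2 ∈ BadF, φ a1 = φ a2 → a1 = a2 := by
    intro a1 ha1 a2 ha2 heq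
    obtain ⟨hdiag1, _⟩ := bad_struct hn a1 (Finset.mem_filter.mp ha1).2
    obtain ⟨hdiag2, _⟩ := bad_struct hn a2 (Finset.mem_filter.mp ha2).2
    rw [hφ, Prod.mk.injEq] at heq
    obtain ⟨hb, hs⟩ := heq
    rw [decide_eq_decide] at hb
    have hTeq : T a1 = T a2 := by
      by_cases hc : 8 * (T a1).card < n
      · rw [if_pos hc] at hs
        rw [if_pos (hb.mp hc)] at hs
        exact hs
      · rw [if_neg hc] at hs
        rw [if_neg (fun h => hc (hb.mpr h))] at hs
        exact compl_injective hs
    funext i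
    have hm : (a1 i = 3) ↔ (a2 i = 3) := by
      constructor
      · intro h
        have : i ∈ T a1 := by rw [hT]; simp [h]
        rw [hTeq] at this
        rw [hT] at this
        simpa using this
      · intro h
        have : i ∈ T a2 := by rw [hT]; simp [h]
        rw [← hTeq] at this
        rw [hT] at this
        simpa using this
    rcases hdiag1 i with h1 | h1 <;> rcases hdiag2 i with h2 | h2
    · rw [h1, h2]
    · exact absurd (hm.mpr h2) (by rw [h1]; decide)
    · exact absurd (hm.mp h1) (by rw [h2]; decide)
    · rw [h1, h2]
  have hcardle : BadF.card ≤ ((Finset.univ : Finset Bool) ×ˢ PowF).card :=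
    Finset.card_le_card_of_injOn φ hmap hinj
  have hcard2 : ((Finset.univ : Finset Bool) ×ˢ PowF).card = 2 * PowF.card := by
    rw [Finset.card_product]
    simp
  calc (BadF.card : ℝ) ≤ (2 * PowF.card : ℕ) := by exact_mod_cast hcard2 ▸ hcardle
    _ = 2 * (PowF.card : ℝ) := by push_cast; ring
    _ ≤ 2 * ((8/7 : ℝ)^n * (7 : ℝ)^((n:ℝ)/8)) := by
        have := powf_card_le (n := n)
        linarith
    _ < (2:ℝ) ^ ((3*(n:ℝ))/4) := rpow_key hn

end BadCard
lemma wproj_hermitian (n : ℕ) : (Wproj n).IsHermitian := by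
  rw [Matrix.IsHermitian]
  ext z z'
  simp only [Wproj, Matrix.conjTranspose_apply, Matrix.vecMulVec_apply, Pi.star_apply,
    star_mul', star_star]
  ring

/-- If `ρ'` is an `n`-qubit state (`n ≥ 5`) with at least
`2^(3n/4)` Pauli strings of expectation `±1`, then `‖|W_n⟩⟨W_n| − ρ'‖₁ ≥ 1/4`. -/
theorem stmt_10 {n : ℕ} (hn : 5 ≤ n)
    (ρ' : Matrix (Fin n → Fin 2) (Fin n → Fin 2) ℂ) (hρ' : IsState ρ')
    (hcard : (2 : ℝ) ^ ((3 * (n : ℝ)) / 4)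
      ≤ (({a : Fin n → Fin 4 | (pExp ρ' a) ^ 2 = 1}.ncard : ℝ))) :
    1 / 4 ≤ traceNorm (Wproj n - ρ') := by
  classical
  set S : Set (Fin n → Fin 4) := {a : Fin n → Fin 4 | (pExp ρ' a) ^ 2 = 1} with hS
  set BadF := Finset.univ.filter (fun a : Fin n → Fin 4 => ¬ |pExp (Wproj n) a| ≤ 3/4)
    with hBadF
  -- find a good Pauli string in S
  have hgood : ∃ a ∈ S, |pExp (Wproj n) a| ≤ 3/4 := by
    by_contra hcon
    push_neg at hcon
    have hsub : S ⊆ (BadF : Set (Fin n → Fin 4)) := by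
      intro a ha
      rw [hBadF]
      simp only [Finset.coe_filter, Set.mem_setOf_eq, Finset.mem_univ, true_and]
      exact fun h => absurd h (not_le.mpr (hcon a ha))
    have h1 : (S.ncard : ℝ) ≤ (BadF.card : ℝ) := by
      have := Set.ncard_le_ncard hsub (BadF.finite_toSet)
      rw [Set.ncard_coe_finset] at this
      exact_mod_cast this
    have := bad_card_lt hn
    linarith
  obtain ⟨a, haS, hgood⟩ := hgood
  have hexp1 : |pExp ρ' a| = 1 := by
    have h1 : (pExp ρ' a) ^ 2 = 1 := haS
    nlinarith [abs_nonneg (pExp ρ' a), sq_abs (pExp ρ' a)]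
  -- the difference matrix
  set D : Matrix (Fin n → Fin 2) (Fin n → Fin 2) ℂ := Wproj n - ρ' with hD
  have hDh : D.IsHermitian := (wproj_hermitian n).sub hρ'.posSemidef.1
  have hdiff : pExp (Wproj n) a - pExp ρ' a = ((PauliOp a * D).trace).re := by
    rw [hD, Matrix.mul_sub, Matrix.trace_sub, Complex.sub_re]
    rfl
  have hb := fun v hv => unit_exp_le (PauliOp a) (pauliOp_unitary a) v hv
  have hkey := key_bound (PauliOp a) D hDh hb
  rw [traceNorm_hermitian D hDh]
  calc (1:ℝ)/4 ≤ |pExp (Wproj n) a - pExp ρ' a| := by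
        have h1 : |pExp ρ' a| - |pExp (Wproj n) a| ≤ |pExp ρ' a - pExp (Wproj n) a| :=
          abs_sub_abs_le_abs_sub _ _
        rw [abs_sub_comm] at h1
        linarith
    _ = |((PauliOp a * D).trace).re| := by rw [hdiff]
    _ ≤ ∑ i, |hDh.eigenvalues i| := hkey
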